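/- The sum of batch maxima for any equal-size partition is at most m times the global maximum and at least the sum of batch maxima achieved by the sorted contiguous partition: m·min X ≤ Σ_sorted ≤ Σ_any ≤ m·max X, where Σ_sorted and Σ_any denote the sums of batch maxima for the sorted contiguous partition and an arbitrary partition, respectively. -/

import Mathlib

/-- The multiset of `n` consecutive values of `L` starting at `start`. -/
def lengthsOf (L : ℕ → ℕ) (start n : ℕ) : Multiset ℕ :=
  (Multiset.range n).map (fun r => L (start + r))

/-- `P` is a partition of the multiset `X` into batches each of size `N`. -/
def IsPartition (X : Multiset ℕ) (N : ℕ) (P : Multiset (Multiset ℕ)) : Prop :=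
  P.sum = X ∧ ∀ B ∈ P, Multiset.card B = N

/-- Sum of batch maxima of a partition. -/
def sumMax (P : Multiset (Multiset ℕ)) : ℕ := (P.map Multiset.sup).sum

private lemma le_orderEmbedding_val {a b : ℕ} (f : Fin a ↪o Fin b) :
    ∀ n (hn : n < a), n ≤ (f ⟨n, hn⟩ : ℕ) := by
  intro n
  induction n with
  | zero => intro _; exact Nat.zero_le _
  | succ n ih =>
    intro hn
    have hn' : n < a := Nat.lt_of_succ_lt hn
    have h1 : f ⟨n, hn'⟩ < f ⟨n + 1, hn⟩ := f.strictMono (by simp [Fin.lt_def])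
    have h1' : ((f ⟨n, hn'⟩ : Fin b) : ℕ) < ((f ⟨n + 1, hn⟩ : Fin b) : ℕ) := h1
    have := ih hn'
    omega

private lemma getD_le_getD_of_sublist {l l' : List ℕ} (hs : l.Pairwise (· ≤ ·))
    (hsub : l'.Sublist l) {k : ℕ} (hk : k < l'.length) :
    l.getD k 0 ≤ l'.getD k 0 := by
  obtain ⟨f, hf⟩ := List.sublist_iff_exists_fin_orderEmbedding_get_eq.mp hsub
  have hkl : k < l.length := lt_of_lt_of_le hk hsub.length_le
  rw [List.getD_eq_getElem _ _ hkl, List.getD_eq_getElem _ _ hk]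
  have h1 : l'.get ⟨k, hk⟩ = l.get (f ⟨k, hk⟩) := hf ⟨k, hk⟩
  have h2 : (⟨k, hkl⟩ : Fin l.length) ≤ f ⟨k, hk⟩ := le_orderEmbedding_val f k hk
  have h3 : l.get ⟨k, hkl⟩ ≤ l.get (f ⟨k, hk⟩) := hs.rel_get_of_le h2
  simpa [List.get_eq_getElem, h1] using h3.trans_eq h1.symm

private lemma key_lemma (N : ℕ) (hN : 0 < N) :
    ∀ (m : ℕ) (l : List ℕ), l.Pairwise (· ≤ ·) → l.length = m * N →
      ∀ P : Multiset (Multiset ℕ), P.sum = ↑l → (∀ B ∈ P, Multiset.card B = N) →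
      (∑ j ∈ Finset.range m, l.getD ((j + 1) * N - 1) 0) ≤ sumMax P := by
  intro m
  induction m with
  | zero => intro l _ _ P _ _; simp
  | succ m ih =>
    intro l hsort hlen P hsum hcard
    have hidx : (m + 1) * N - 1 < l.length := by
      have : (m + 1) * N = m * N + N := by ring
      omega
    set a := l.getD ((m + 1) * N - 1) 0 with ha
    have haX : a ∈ P.sum := by
      rw [hsum, ha, List.getD_eq_getElem _ _ hidx]
      exact Multiset.mem_coe.mpr (List.getElem_mem hidx)
    obtain ⟨B, hBP, haB⟩ := Multiset.mem_join.mp haX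
    have hPB : P = B ::ₘ P.erase B := (Multiset.cons_erase hBP).symm
    set P' := P.erase B with hP'
    have hsum' : P.sum = B + P'.sum := by rw [hPB]; exact Multiset.sum_cons _ _
    set l' := (P'.sum).sort (· ≤ ·) with hl'
    have hl'co : (↑l' : Multiset ℕ) = P'.sum := Multiset.sort_eq _ _
    have hl'sort : l'.Pairwise (· ≤ ·) := Multiset.pairwise_sort _ _
    have hcardX : Multiset.card P.sum = (m + 1) * N := by
      rw [hsum]; simpa using hlen
    have hcardB : Multiset.card B = N := hcard B hBP
    have hcardX' : Multiset.card P'.sum = m * N := by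
      have h1 : Multiset.card P.sum = Multiset.card B + Multiset.card P'.sum := by
        rw [hsum', Multiset.card_add]
      have h2 : (m + 1) * N = m * N + N := by ring
      omega
    have hlen' : l'.length = m * N := by
      have := Multiset.length_sort (α := ℕ) (r := (· ≤ ·)) (s := P'.sum)
      rw [hl']; omega
    have hsub : l'.Sublist l := by
      apply List.sublist_of_subperm_of_pairwise _ hl'sort hsort
      rw [← Multiset.coe_le, hl'co, ← hsum, hsum']
      exact le_add_self
    have hIH : (∑ j ∈ Finset.range m, l'.getD ((j + 1) * N - 1) 0) ≤ sumMax P' :=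
      ih l' hl'sort hlen' P' hl'co.symm
        (fun C hC => hcard C (Multiset.mem_of_le (Multiset.erase_le _ _) hC))
    have hterm : ∀ j ∈ Finset.range m,
        l.getD ((j + 1) * N - 1) 0 ≤ l'.getD ((j + 1) * N - 1) 0 := by
      intro j hj
      rw [Finset.mem_range] at hj
      apply getD_le_getD_of_sublist hsort hsub
      have h1 : (j + 1) * N ≤ m * N := Nat.mul_le_mul_right N hj
      have hN0 : 0 < (j + 1) * N := Nat.mul_pos (Nat.succ_pos j) hN
      omega
    have hsumMax : sumMax P = B.sup + sumMax P' := by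
      rw [sumMax, hPB, Multiset.map_cons, Multiset.sum_cons]; rfl
    have haBsup : a ≤ B.sup := Multiset.le_sup haB
    calc (∑ j ∈ Finset.range (m + 1), l.getD ((j + 1) * N - 1) 0)
        = (∑ j ∈ Finset.range m, l.getD ((j + 1) * N - 1) 0) + a := by
          rw [Finset.sum_range_succ]
      _ ≤ sumMax P' + B.sup :=
          add_le_add ((Finset.sum_le_sum hterm).trans hIH) haBsup
      _ = sumMax P := by rw [hsumMax, Nat.add_comm]

/-- Chain of bounds on sums of batch maxima:
`m·min X ≤ Σ_sorted ≤ Σ_any ≤ m·max X`. -/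
theorem sumMax_chain_bounds (L : ℕ → ℕ) (hL : Monotone L)
    (m N : ℕ) (hN : 0 < N)
    (minX maxX : ℕ)
    (hmin : ∀ i < m * N, minX ≤ L i) (hmax : ∀ i < m * N, L i ≤ maxX)
    (P : Multiset (Multiset ℕ)) (hP : IsPartition (lengthsOf L 0 (m * N)) N P) :
    m * minX ≤ (∑ j ∈ Finset.range m, (lengthsOf L (j * N) N).sup) ∧
      (∑ j ∈ Finset.range m, (lengthsOf L (j * N) N).sup) ≤ sumMax P ∧
      sumMax P ≤ m * maxX := by
  obtain ⟨hsum, hcard⟩ := hP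
  -- the sup of the j-th sorted block
  have hsup : ∀ j < m, (lengthsOf L (j * N) N).sup = L (j * N + (N - 1)) := by
    intro j _
    apply le_antisymm
    · apply Multiset.sup_le.mpr
      intro x hx
      rw [lengthsOf, Multiset.mem_map] at hx
      obtain ⟨r, hr, rfl⟩ := hx
      rw [Multiset.mem_range] at hr
      exact hL (by omega)
    · apply Multiset.le_sup
      rw [lengthsOf, Multiset.mem_map]
      exact ⟨N - 1, Multiset.mem_range.mpr (by omega), rfl⟩
  refine ⟨?_, ?_, ?_⟩
  · -- m * minX ≤ sorted sum
    calc m * minX = ∑ _j ∈ Finset.range m, minX := by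
          rw [Finset.sum_const, Finset.card_range, smul_eq_mul]
      _ ≤ ∑ j ∈ Finset.range m, (lengthsOf L (j * N) N).sup := by
          apply Finset.sum_le_sum
          intro j hj
          rw [Finset.mem_range] at hj
          rw [hsup j hj]
          apply hmin
          have : (j + 1) * N ≤ m * N := Nat.mul_le_mul_right N hj
          have : (j + 1) * N = j * N + N := by ring
          omega
  · -- sorted sum ≤ sumMax P
    set l : List ℕ := (List.range (m * N)).map (fun r => L (0 + r)) with hl
    have hlco : (↑l : Multiset ℕ) = lengthsOf L 0 (m * N) := by
      rw [hl, lengthsOf, Multiset.range, Multiset.map_coe]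
    have hlsort : l.Pairwise (· ≤ ·) := by
      rw [hl]
      apply List.Pairwise.map
      · intro x y (hxy : x < y)
        exact hL (by omega)
      · exact List.pairwise_lt_range (n := m * N)
    have hllen : l.length = m * N := by simp [hl]
    have hgetD : ∀ j < m, l.getD ((j + 1) * N - 1) 0 = L (j * N + (N - 1)) := by
      intro j hj
      have h1 : (j + 1) * N ≤ m * N := Nat.mul_le_mul_right N hj
      have h2 : (j + 1) * N = j * N + N := by ring
      have hidx : (j + 1) * N - 1 < l.length := by omega
      rw [List.getD_eq_getElem _ _ hidx]
      simp only [hl, List.getElem_map, List.getElem_range]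
      congr 1
      omega
    have hk := key_lemma N hN m l hlsort hllen P (by rw [hlco, hsum]) hcard
    calc (∑ j ∈ Finset.range m, (lengthsOf L (j * N) N).sup)
        = ∑ j ∈ Finset.range m, l.getD ((j + 1) * N - 1) 0 := by
          apply Finset.sum_congr rfl
          intro j hj
          rw [Finset.mem_range] at hj
          rw [hsup j hj, hgetD j hj]
      _ ≤ sumMax P := hk
  · -- sumMax P ≤ m * maxX
    have hcardP : Multiset.card P = m := by
      have h1 : Multiset.card P.sum = (P.map Multiset.card).sum := Multiset.card_join P
      have h2 : (P.map Multiset.card).sum = Multiset.card P * N := by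
        rw [Multiset.map_congr rfl hcard]
        simp [Multiset.map_const', mul_comm]
      have h3 : Multiset.card P.sum = m * N := by
        rw [hsum, lengthsOf]; simp
      exact Nat.eq_of_mul_eq_mul_right hN (by omega)
    have hBsup : ∀ b ∈ P.map Multiset.sup, b ≤ maxX := by
      intro b hb
      rw [Multiset.mem_map] at hb
      obtain ⟨B, hBP, rfl⟩ := hb
      apply Multiset.sup_le.mpr
      intro x hx
      have hxX : x ∈ P.sum := Multiset.mem_join.mpr ⟨B, hBP, hx⟩
      rw [hsum, lengthsOf, Multiset.mem_map] at hxX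
      obtain ⟨r, hr, rfl⟩ := hxX
      rw [Multiset.mem_range] at hr
      exact hmax _ (by omega)
    calc sumMax P ≤ Multiset.card (P.map Multiset.sup) • maxX :=
          Multiset.sum_le_card_nsmul _ _ hBsup
      _ = m * maxX := by rw [Multiset.card_map, hcardP, smul_eq_mul]
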